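/- arXiv:1907.03158 — 2 statements merged into one kernel-verified Lean document; each statement's English description precedes it below -/
import Mathlib

section
/- For every tree T, the γ-graph T(γ) is connected. -/
open SimpleGraph Finset

/-- The closed neighbourhood of a vertex. -/
def closedNbhd {V : Type} (G : SimpleGraph V) (x : V) : Set V :=
  {y | y = x ∨ G.Adj x y}

/-- `D` is a dominating set of `G`. -/
def isDomSet {V : Type} [Fintype V] [DecidableEq V] (G : SimpleGraph V) (D : Finset V) : Prop :=
  ∀ v : V, ∃ d ∈ D, v ∈ closedNbhd G d

/-- `D` is a minimum dominating set (γ-set) of `G`. -/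
def isMinDomSet {V : Type} [Fintype V] [DecidableEq V] (G : SimpleGraph V) (D : Finset V) : Prop :=
  isDomSet G D ∧ ∀ D' : Finset V, isDomSet G D' → D.card ≤ D'.card

/-- The set of `D`-private neighbours of `x`: vertices in `N[x]` not in the closed
neighbourhood of any other vertex of `D`. -/
def privN {V : Type} [Fintype V] [DecidableEq V] (G : SimpleGraph V) (D : Finset V) (x : V) :
    Set V :=
  {y | y ∈ closedNbhd G x ∧ ∀ z ∈ D, z ≠ x → y ∉ closedNbhd G z}

/-- The γ-graph of `G`: vertices are the γ-sets of `G`, two γ-sets adjacent iff they differ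
by a swap of two adjacent vertices. -/
def gammaGraph {V : Type} [Fintype V] [DecidableEq V] (G : SimpleGraph V) :
    SimpleGraph {D : Finset V // isMinDomSet G D} where
  Adj D₁ D₂ := D₁ ≠ D₂ ∧ ∃ u v : V, G.Adj u v ∧
    (D₂.1 = (D₁.1 \ {u}) ∪ {v} ∨ D₁.1 = (D₂.1 \ {u}) ∪ {v})
  symm := by
    constructor
    rintro D₁ D₂ ⟨hne, u, v, huv, h | h⟩
    · exact ⟨hne.symm, u, v, huv, Or.inr h⟩
    · exact ⟨hne.symm, u, v, huv, Or.inl h⟩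
  loopless := by constructor; rintro D ⟨hne, -⟩; exact hne rfl

section GammaAux

variable {V : Type} [Fintype V] [DecidableEq V] {T : SimpleGraph V} {r : V}

lemma exists_shortest_path (hc : T.Connected) (u v : V) :
    ∃ q : T.Walk u v, q.IsPath ∧ q.length = T.dist u v := by
  obtain ⟨w, hw⟩ := hc.exists_walk_length_eq_dist u v
  refine ⟨w.bypass, w.bypass_isPath, le_antisymm (hw ▸ w.length_bypass_le) (SimpleGraph.dist_le _)⟩

lemma not_mem_support_of_dist_lt {v x : V} (q : T.Walk v r) (hq : q.length = T.dist v r)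
    (hx : T.dist v r < T.dist x r) : x ∉ q.support := by
  intro hxs
  have h1 : T.dist x r ≤ (q.dropUntil x hxs).length := SimpleGraph.dist_le _
  have h2 := q.length_dropUntil_le hxs
  omega

lemma tree_adj_dist_ne (hT : T.IsTree) {u v : V} (h : T.Adj u v) :
    T.dist u r ≠ T.dist v r := by
  intro hd
  have hc := hT.isConnected
  obtain ⟨q, hqp, hql⟩ := exists_shortest_path hc v r
  have husup : u ∉ q.support := by
    intro hus
    have hspec := q.take_spec hus
    have hlen : (q.takeUntil u hus).length + (q.dropUntil u hus).length = q.length := by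
      rw [← SimpleGraph.Walk.length_append, hspec]
    have h1 : T.dist u r ≤ (q.dropUntil u hus).length := SimpleGraph.dist_le _
    have h2 : T.dist v u ≤ (q.takeUntil u hus).length := SimpleGraph.dist_le _
    have h3 : 0 < T.dist v u := hc.pos_dist_of_ne (Ne.symm h.ne)
    omega
  obtain ⟨p, hpp, hpl⟩ := exists_shortest_path hc u r
  have heq := hT.IsAcyclic.path_unique ⟨p, hpp⟩ ⟨SimpleGraph.Walk.cons h q, hqp.cons husup⟩
  have := congrArg (fun w : T.Path u r => w.1.length) heq
  simp only [SimpleGraph.Walk.length_cons] at this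
  omega

lemma tree_adj_dist (hT : T.IsTree) {u v : V} (h : T.Adj u v) :
    T.dist v r = T.dist u r + 1 ∨ T.dist u r = T.dist v r + 1 := by
  have h1 : T.dist u r ≤ T.dist u v + T.dist v r := hT.isConnected.dist_triangle
  have h2 : T.dist v r ≤ T.dist v u + T.dist u r := hT.isConnected.dist_triangle
  have h3 : T.dist u v ≤ 1 := by
    simpa using SimpleGraph.dist_le (SimpleGraph.Walk.cons h SimpleGraph.Walk.nil)
  have h4 : T.dist v u ≤ 1 := by
    simpa using SimpleGraph.dist_le (SimpleGraph.Walk.cons h.symm SimpleGraph.Walk.nil)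
  have h5 := tree_adj_dist_ne (r := r) hT h
  omega

lemma tree_parent_exists (hT : T.IsTree) {x : V} (hx : x ≠ r) :
    ∃ p, T.Adj x p ∧ T.dist p r + 1 = T.dist x r := by
  have hc := hT.isConnected
  obtain ⟨w, hw⟩ := hc.exists_walk_length_eq_dist x r
  have hpos : 0 < T.dist x r := hc.pos_dist_of_ne hx
  cases w with
  | nil => simp at hw hpos
  | cons h p =>
    rename_i b
    refine ⟨b, h, ?_⟩
    simp only [SimpleGraph.Walk.length_cons] at hw
    have h1 : T.dist b r ≤ p.length := SimpleGraph.dist_le _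
    have h2 : T.dist x r ≤ T.dist x b + T.dist b r := hc.dist_triangle
    have h3 : T.dist x b ≤ 1 := by
      simpa using SimpleGraph.dist_le (SimpleGraph.Walk.cons h SimpleGraph.Walk.nil)
    omega

lemma tree_parent_unique (hT : T.IsTree) {x p₁ p₂ : V} (h₁ : T.Adj x p₁)
    (hd₁ : T.dist p₁ r + 1 = T.dist x r) (h₂ : T.Adj x p₂)
    (hd₂ : T.dist p₂ r + 1 = T.dist x r) : p₁ = p₂ := by
  have hc := hT.isConnected
  obtain ⟨q₁, hq₁p, hq₁l⟩ := exists_shortest_path hc p₁ r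
  obtain ⟨q₂, hq₂p, hq₂l⟩ := exists_shortest_path hc p₂ r
  have hx₁ : x ∉ q₁.support := not_mem_support_of_dist_lt q₁ hq₁l (by omega)
  have hx₂ : x ∉ q₂.support := not_mem_support_of_dist_lt q₂ hq₂l (by omega)
  have heq := hT.IsAcyclic.path_unique ⟨SimpleGraph.Walk.cons h₁ q₁, hq₁p.cons hx₁⟩
    ⟨SimpleGraph.Walk.cons h₂ q₂, hq₂p.cons hx₂⟩
  have := congrArg (fun w : T.Path x r => w.1.getVert 1) heq
  simpa [SimpleGraph.Walk.getVert_cons_succ, SimpleGraph.Walk.getVert_zero] using this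

lemma swap_minDom {D : Finset V} (hD : isMinDomSet T D) {x p : V} (hx : x ∈ D) (hxp : x ≠ p)
    (hdom : isDomSet T ((D \ {x}) ∪ {p})) :
    isMinDomSet T ((D \ {x}) ∪ {p}) ∧ p ∉ D := by
  have hpD : p ∉ D := by
    intro hpD
    have hsub : (D \ {x}) ∪ {p} ⊆ D := by
      intro y hy
      rcases Finset.mem_union.1 hy with hy | hy
      · exact (Finset.mem_sdiff.1 hy).1
      · rwa [Finset.mem_singleton.1 hy]
    have hne : (D \ {x}) ∪ {p} ≠ D := by
      intro he
      have : x ∈ (D \ {x}) ∪ {p} := he.symm ▸ hx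
      rcases Finset.mem_union.1 this with h | h
      · exact (Finset.mem_sdiff.1 h).2 (Finset.mem_singleton_self x)
      · exact hxp (Finset.mem_singleton.1 h)
    have hlt : ((D \ {x}) ∪ {p}).card < D.card := Finset.card_lt_card (hsub.ssubset_of_ne hne)
    have := hD.2 _ hdom
    omega
  have hcard : ((D \ {x}) ∪ {p}).card = D.card := by
    rw [Finset.card_union_of_disjoint (by simp [Finset.disjoint_singleton_right,
      Finset.mem_sdiff, hpD]), Finset.card_sdiff_of_subset (by simpa using hx)]
    have : 0 < D.card := Finset.card_pos.2 ⟨x, hx⟩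
    simp
    omega
  exact ⟨⟨hdom, fun D' hD' => hcard ▸ hD.2 D' hD'⟩, hpD⟩

lemma private_child_of_not_dom (hT : T.IsTree) {D : Finset V} (hD : isMinDomSet T D) {x p : V}
    (hx : x ∈ D) (hxr : x ≠ r) (hp : T.Adj x p) (hpd : T.dist p r + 1 = T.dist x r)
    (hnd : ¬ isDomSet T ((D \ {x}) ∪ {p})) :
    ∃ c, c ∈ privN T D x ∧ T.Adj x c ∧ T.dist c r = T.dist x r + 1 := by
  unfold isDomSet at hnd
  push_neg at hnd
  obtain ⟨v, hv⟩ := hnd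
  have hvp : ∀ d ∈ (D \ {x}) ∪ {p}, v ∉ closedNbhd T d := by
    intro d hd hvd; exact hv d hd hvd
  have hpriv : v ∈ privN T D x ∧ v ∈ closedNbhd T x := by
    obtain ⟨d, hdD, hvd⟩ := hD.1 v
    have hdx : d = x := by
      by_contra hne
      exact hvp d (Finset.mem_union_left _ (Finset.mem_sdiff.2 ⟨hdD, by simpa using hne⟩)) hvd
    subst hdx
    refine ⟨⟨hvd, ?_⟩, hvd⟩
    intro z hz hzx hvz
    exact hvp z (Finset.mem_union_left _ (Finset.mem_sdiff.2 ⟨hz, by simpa using hzx⟩)) hvz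
  have hvnotp : v ∉ closedNbhd T p :=
    hvp p (Finset.mem_union_right _ (Finset.mem_singleton_self p))
  have hvnex : v ≠ x := by
    intro he; subst he
    exact hvnotp (Or.inr hp.symm)
  have hvadj : T.Adj x v := by
    rcases hpriv.2 with h | h
    · exact absurd h hvnex
    · exact h
  refine ⟨v, hpriv.1, hvadj, ?_⟩
  rcases tree_adj_dist (r := r) hT hvadj with h | h
  · exact h
  · exfalso
    have : p = v := tree_parent_unique hT hp hpd hvadj (by omega)
    exact hvnotp (Or.inl this.symm)

lemma dom_of_no_private_child (hT : T.IsTree) {D : Finset V} (hD : isMinDomSet T D) {x p : V}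
    (hx : x ∈ D) (hxr : x ≠ r) (hp : T.Adj x p) (hpd : T.dist p r + 1 = T.dist x r)
    (hnc : ¬ ∃ c, c ∈ privN T D x ∧ T.Adj x c ∧ T.dist c r = T.dist x r + 1) :
    isDomSet T ((D \ {x}) ∪ {p}) := by
  by_contra hnd
  exact hnc (private_child_of_not_dom hT hD hx hxr hp hpd hnd)

/-- A "stuck" γ-set (every non-root member has a private child) containing a deepest
vertex of the symmetric difference with another γ-set yields a contradiction. -/
lemma stuck_core (hT : T.IsTree) {D D' : Finset V} (hD : isMinDomSet T D) (hD' : isMinDomSet T D')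
    (sD : ∀ x ∈ D, x ≠ r → ∃ c, c ∈ privN T D x ∧ T.Adj x c ∧ T.dist c r = T.dist x r + 1)
    {x : V} (hxD : x ∈ D) (hxD' : x ∉ D')
    (hmax : ∀ y ∈ (D \ D') ∪ (D' \ D), T.dist y r ≤ T.dist x r) : False := by
  by_cases hxr : x = r
  · have hsub : D' ⊆ D := by
      intro y hyD'
      by_contra hyD
      have h0 : T.dist y r ≤ T.dist x r :=
        hmax y (Finset.mem_union_right _ (Finset.mem_sdiff.2 ⟨hyD', hyD⟩))
      have hxx : T.dist x r = 0 := by rw [hxr]; exact SimpleGraph.dist_self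
      have hyr : y = r := (hT.isConnected.dist_eq_zero_iff).1 (by omega)
      exact hxD' ((hyr.trans hxr.symm) ▸ hyD')
    have h1 : D.card ≤ D'.card := hD.2 _ hD'.1
    have h2 : D'.card < D.card :=
      Finset.card_lt_card (hsub.ssubset_of_ne (fun he => hxD' (he ▸ hxD)))
    omega
  · obtain ⟨c, hcpriv, hcadj, hcd⟩ := sD x hxD hxr
    have hcx : c ≠ x := by
      intro h; rw [h] at hcd; omega
    obtain ⟨d', hd'D', hcd'⟩ := hD'.1 c
    have hkey : d' = x ∨ T.dist x r < T.dist d' r := by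
      rcases hcd' with h | h
      · right; rw [← h]; omega
      · rcases tree_adj_dist (r := r) hT h with h2 | h2
        · left
          exact tree_parent_unique (r := r) hT h.symm (by omega) hcadj.symm (by omega)
        · right; omega
    rcases hkey with h | h
    · exact hxD' (h ▸ hd'D')
    · have hd'D : d' ∈ D := by
        by_contra hd'
        have := hmax d' (Finset.mem_union_right _ (Finset.mem_sdiff.2 ⟨hd'D', hd'⟩))
        omega
      have hd'x : d' ≠ x := by
        intro he; rw [he] at h; omega
      exact hcpriv.2 d' hd'D hd'x hcd'

lemma stuck_unique (hT : T.IsTree) {D D' : Finset V}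
    (hD : isMinDomSet T D) (hD' : isMinDomSet T D')
    (sD : ∀ x ∈ D, x ≠ r → ∃ c, c ∈ privN T D x ∧ T.Adj x c ∧ T.dist c r = T.dist x r + 1)
    (sD' : ∀ x ∈ D', x ≠ r → ∃ c, c ∈ privN T D' x ∧ T.Adj x c ∧ T.dist c r = T.dist x r + 1) :
    D = D' := by
  by_contra hne
  have hsd : ((D \ D') ∪ (D' \ D)).Nonempty := by
    rw [Finset.nonempty_iff_ne_empty]
    intro he
    rw [Finset.union_eq_empty, Finset.sdiff_eq_empty_iff_subset,
      Finset.sdiff_eq_empty_iff_subset] at he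
    exact hne (Finset.Subset.antisymm he.1 he.2)
  obtain ⟨x, hxmem, hxmax⟩ := Finset.exists_max_image _ (fun y => T.dist y r) hsd
  rcases Finset.mem_union.1 hxmem with h | h
  · exact stuck_core hT hD hD' sD (Finset.mem_sdiff.1 h).1 (Finset.mem_sdiff.1 h).2 hxmax
  · refine stuck_core hT hD' hD sD' (Finset.mem_sdiff.1 h).1 (Finset.mem_sdiff.1 h).2 ?_
    intro y hy
    exact hxmax y (by rwa [Finset.union_comm])

lemma phi_swap {D : Finset V} {x p : V} (hx : x ∈ D) (hpD : p ∉ D)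
    (hpd : T.dist p r + 1 = T.dist x r) :
    (∑ y ∈ (D \ {x}) ∪ {p}, T.dist y r) + 1 = ∑ y ∈ D, T.dist y r := by
  rw [Finset.sum_union (by simp [Finset.disjoint_singleton_right, Finset.mem_sdiff, hpD])]
  have hs := Finset.sum_sdiff (f := fun y => T.dist y r)
    (show {x} ⊆ D by simpa using hx)
  rw [Finset.sum_singleton] at hs ⊢
  have hs' : (∑ y ∈ D \ {x}, T.dist y r) + T.dist x r = ∑ y ∈ D, T.dist y r := hs
  omega

lemma exists_minDom (T : SimpleGraph V) : ∃ D : Finset V, isMinDomSet T D := by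
  have : Nonempty {D : Finset V // isDomSet T D} :=
    ⟨⟨Finset.univ, fun v => ⟨v, Finset.mem_univ v, Or.inl rfl⟩⟩⟩
  obtain ⟨⟨D, hD⟩, hmin⟩ :=
    Finite.exists_min (fun D : {D : Finset V // isDomSet T D} => D.1.card)
  exact ⟨D, hD, fun D' hD' => hmin ⟨D', hD'⟩⟩

lemma reach (hT : T.IsTree) (Dstar : {D : Finset V // isMinDomSet T D})
    (hstar : ∀ E : {D : Finset V // isMinDomSet T D},
      (∑ x ∈ Dstar.1, T.dist x r) ≤ ∑ x ∈ E.1, T.dist x r) :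
    ∀ n (D : {D : Finset V // isMinDomSet T D}), (∑ x ∈ D.1, T.dist x r) ≤ n →
      (gammaGraph T).Reachable D Dstar := by
  have hstuckstar : ∀ x ∈ Dstar.1, x ≠ r →
      ∃ c, c ∈ privN T Dstar.1 x ∧ T.Adj x c ∧ T.dist c r = T.dist x r + 1 := by
    intro x hx hxr
    obtain ⟨p, hp, hpd⟩ := tree_parent_exists hT hxr
    by_cases hdom : isDomSet T ((Dstar.1 \ {x}) ∪ {p})
    · exfalso
      obtain ⟨hmin, hpD⟩ := swap_minDom Dstar.2 hx hp.ne hdom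
      have h1 := hstar ⟨_, hmin⟩
      have h2 := phi_swap (T := T) (r := r) hx hpD hpd
      simp only at h1
      omega
    · exact private_child_of_not_dom hT Dstar.2 hx hxr hp hpd hdom
  intro n
  induction n with
  | zero =>
    intro D hphi
    have hstuckD : ∀ x ∈ D.1, x ≠ r →
        ∃ c, c ∈ privN T D.1 x ∧ T.Adj x c ∧ T.dist c r = T.dist x r + 1 := by
      intro x hx hxr
      exfalso
      have h1 : 0 < T.dist x r := hT.isConnected.pos_dist_of_ne hxr
      have h2 : T.dist x r ≤ ∑ y ∈ D.1, T.dist y r :=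
        Finset.single_le_sum (f := fun y => T.dist y r) (fun i _ => Nat.zero_le _) hx
      omega
    have := stuck_unique hT D.2 Dstar.2 hstuckD hstuckstar
    exact (Subtype.ext this : D = Dstar) ▸ SimpleGraph.Reachable.refl _
  | succ n ih =>
    intro D hphi
    by_cases hstuck : ∀ x ∈ D.1, x ≠ r →
        ∃ c, c ∈ privN T D.1 x ∧ T.Adj x c ∧ T.dist c r = T.dist x r + 1
    · have := stuck_unique hT D.2 Dstar.2 hstuck hstuckstar
      exact (Subtype.ext this : D = Dstar) ▸ SimpleGraph.Reachable.refl _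
    · push_neg at hstuck
      obtain ⟨x, hx, hxr, hnc⟩ := hstuck
      have hnc' : ¬ ∃ c, c ∈ privN T D.1 x ∧ T.Adj x c ∧ T.dist c r = T.dist x r + 1 := by
        intro ⟨c, h1, h2, h3⟩
        exact (hnc c h1 h2) h3
      obtain ⟨p, hp, hpd⟩ := tree_parent_exists hT hxr
      have hdom := dom_of_no_private_child hT D.2 hx hxr hp hpd hnc'
      obtain ⟨hmin, hpD⟩ := swap_minDom D.2 hx hp.ne hdom
      have hxD' : x ∉ (D.1 \ {x}) ∪ {p} := by
        intro hmem
        rcases Finset.mem_union.1 hmem with h | h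
        · exact (Finset.mem_sdiff.1 h).2 (Finset.mem_singleton_self x)
        · exact hp.ne (Finset.mem_singleton.1 h)
      have hadj : (gammaGraph T).Adj D ⟨(D.1 \ {x}) ∪ {p}, hmin⟩ :=
        ⟨fun he => hxD' (by rw [he] at hx; exact hx), x, p, hp, Or.inl rfl⟩
      have hphi' := phi_swap (T := T) (r := r) hx hpD hpd
      refine hadj.reachable.trans (ih ⟨(D.1 \ {x}) ∪ {p}, hmin⟩ ?_)
      show (∑ y ∈ (D.1 \ {x}) ∪ {p}, T.dist y r) ≤ n
      omega

end GammaAux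

theorem stmt8 {V : Type} [Fintype V] [DecidableEq V] (T : SimpleGraph V) (hT : T.IsTree) :
    (gammaGraph T).Connected := by
  have hne : Nonempty V := hT.isConnected.nonempty
  obtain ⟨r⟩ := hne
  obtain ⟨D₀, hD₀⟩ := exists_minDom T
  have hnety : Nonempty {D : Finset V // isMinDomSet T D} := ⟨⟨D₀, hD₀⟩⟩
  obtain ⟨Dstar, hstar⟩ := Finite.exists_min
    (fun E : {D : Finset V // isMinDomSet T D} => ∑ x ∈ E.1, T.dist x r)
  have hreach : ∀ D : {D : Finset V // isMinDomSet T D}, (gammaGraph T).Reachable D Dstar :=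
    fun D => reach hT Dstar hstar _ D le_rfl
  exact ⟨fun A B => (hreach A).trans (hreach B).symm⟩
end

section
/- Let T be a tree and let S be a minimum dominating set of T, and let L₁, …, L_k (k ≥ 1) be γ-sets each adjacent in T(γ) to S and each of degree one in T(γ), with deg_{T(γ)}(S) ≥ 3. Then there exists a single vertex x ∈ S and vertices y₁, …, y_k ∉ S with x adjacent to each yᵢ and Lᵢ = (S \ {x}) ∪ {yᵢ} for all i. -/
open SimpleGraph Finset

section helpers
variable {V : Type} [Fintype V] [DecidableEq V] {T : SimpleGraph V}

lemma two_paths {u v : V} (hA : T.IsAcyclic) {p q : T.Walk u v}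
    (hp : p.IsPath) (hq : q.IsPath) (h : p.support ≠ q.support) : False := by
  have heq := isAcyclic_iff_path_unique.mp hA ⟨p, hp⟩ ⟨q, hq⟩
  exact h (congrArg (fun r : T.Path u v => r.1.support) heq)

lemma no_triangle (hA : T.IsAcyclic) {a b c : V} (hab : T.Adj a b) (hbc : T.Adj b c)
    (hac : T.Adj a c) : False := by
  refine two_paths hA (p := Walk.cons hac Walk.nil)
    (q := Walk.cons hab (Walk.cons hbc Walk.nil)) ?_ ?_ ?_
  · simp [Walk.cons_isPath_iff, hac.ne]
  · simp [Walk.cons_isPath_iff, hab.ne, hbc.ne, hac.ne]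
  · simp

lemma no_c4 (hA : T.IsAcyclic) {a b c d : V} (hab : T.Adj a b) (hbc : T.Adj b c)
    (hcd : T.Adj c d) (hda : T.Adj d a) (hac : a ≠ c) (hbd : b ≠ d) : False := by
  refine two_paths hA (p := Walk.cons hab (Walk.cons hbc Walk.nil))
    (q := Walk.cons hda.symm (Walk.cons hcd.symm Walk.nil)) ?_ ?_ ?_
  · simp [Walk.cons_isPath_iff, hab.ne, hbc.ne, hac]
  · simp [Walk.cons_isPath_iff, hda.ne', hcd.ne', hac]
  · simp [hbd]

lemma min_card_eq {D D' : Finset V} (h : isMinDomSet T D) (h' : isMinDomSet T D') :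
    D.card = D'.card := le_antisymm (h.2 D' h'.1) (h'.2 D h.1)

lemma swap_core {S L : Finset V} (hcard : S.card = L.card) (hne : S ≠ L)
    {u v : V} (huv : T.Adj u v) (h : L = (S \ {u}) ∪ {v}) :
    u ∈ S ∧ v ∉ S := by
  have hu : u ∈ S := by
    by_contra hu
    have h1 : S \ {u} = S := by
      rw [sdiff_singleton_eq_erase, erase_eq_of_notMem hu]
    rw [h1] at h
    have hsub : S ⊆ L := by rw [h]; exact subset_union_left
    exact hne (Finset.eq_of_subset_of_card_le hsub hcard.ge)
  have hv : v ∉ S := by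
    intro hvS
    have hv' : v ∈ S \ {u} := mem_sdiff.mpr ⟨hvS, by simp [huv.ne']⟩
    have hL : L = S \ {u} := h.trans (union_eq_left.mpr (singleton_subset_iff.mpr hv'))
    have hlt : (S \ {u}).card < S.card := by
      rw [sdiff_singleton_eq_erase]; exact card_erase_lt_of_mem hu
    rw [← hL, ← hcard] at hlt
    exact lt_irrefl _ hlt
  exact ⟨hu, hv⟩

lemma swap_of_adj {S L : Finset V} {hS : isMinDomSet T S} {hL : isMinDomSet T L}
    (h : (gammaGraph T).Adj ⟨S, hS⟩ ⟨L, hL⟩) :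
    ∃ a ∈ S, ∃ b ∉ S, T.Adj a b ∧ L = (S \ {a}) ∪ {b} := by
  obtain ⟨hne, u, v, huv, hc | hc⟩ := h
  · have hc' : L = (S \ {u}) ∪ {v} := hc
    obtain ⟨hu, hv⟩ := swap_core (min_card_eq hS hL)
      (fun hSL => hne (Subtype.ext hSL)) huv hc'
    exact ⟨u, hu, v, hv, huv, hc'⟩
  · have hc' : S = (L \ {u}) ∪ {v} := hc
    obtain ⟨hu, hv⟩ := swap_core (min_card_eq hL hS)
      (fun hLS => hne (Subtype.ext hLS.symm)) huv hc'
    have hvS : v ∈ S := by rw [hc']; exact mem_union_right _ (mem_singleton_self v)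
    have huS : u ∉ S := by
      rw [hc']; simp [huv.ne]
    refine ⟨v, hvS, u, huS, huv.symm, ?_⟩
    ext z
    rw [hc']
    simp only [mem_union, mem_sdiff, mem_singleton]
    by_cases hzu : z = u <;> by_cases hzv : z = v <;> simp_all <;> tauto

end helpers

section helpers2
variable {V : Type} [Fintype V] [DecidableEq V] {T : SimpleGraph V}

lemma pn_subset (hA : T.IsAcyclic) {S : Finset V} {a b : V} (hab : T.Adj a b)
    (hdom : isDomSet T ((S \ {a}) ∪ {b})) {p : V} (hp : p ∈ privN T S a) :
    p = a ∨ p = b := by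
  obtain ⟨hpa, hpriv⟩ := hp
  obtain ⟨d, hd, hpd⟩ := hdom p
  rcases Finset.mem_union.mp hd with hd' | hd'
  · obtain ⟨hdS, hdne⟩ := Finset.mem_sdiff.mp hd'
    exact absurd hpd (hpriv d hdS (by simpa using hdne))
  · have hdb : d = b := Finset.mem_singleton.mp hd'
    subst hdb
    rcases hpa with rfl | hpa'
    · exact Or.inl rfl
    · rcases hpd with rfl | hpd'
      · exact Or.inr rfl
      · exact (no_triangle hA hab hpd' hpa').elim

lemma swap_min {S : Finset V} (hS : isMinDomSet T S) {a b : V} (ha : a ∈ S) (hb : b ∉ S)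
    (hpn : ∀ p, p ∈ privN T S a → p ∈ closedNbhd T b) :
    isMinDomSet T ((S \ {a}) ∪ {b}) := by
  have hdom : isDomSet T ((S \ {a}) ∪ {b}) := by
    intro t
    by_cases hex : ∃ z ∈ S, z ≠ a ∧ t ∈ closedNbhd T z
    · obtain ⟨z, hz, hza, htz⟩ := hex
      exact ⟨z, mem_union_left _ (mem_sdiff.mpr ⟨hz, by simpa using hza⟩), htz⟩
    · push_neg at hex
      obtain ⟨d, hd, htd⟩ := hS.1 t
      have hda : d = a := by
        by_contra hda
        exact hex d hd hda htd
      subst hda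
      have hpriv : t ∈ privN T S d := ⟨htd, fun z hz hza => hex z hz hza⟩
      exact ⟨b, mem_union_right _ (mem_singleton_self b), hpn t hpriv⟩
  have hcard : ((S \ {a}) ∪ {b}).card = S.card := by
    have hd : Disjoint (S \ {a}) {b} := by
      simp [Finset.disjoint_singleton_right, hb]
    have hp : 0 < S.card := card_pos.mpr ⟨a, ha⟩
    rw [card_union_of_disjoint hd, card_singleton, sdiff_singleton_eq_erase,
      card_erase_of_mem ha]
    omega
  exact ⟨hdom, fun D' hD' => by rw [hcard]; exact hS.2 D' hD'⟩

lemma leaf_contra {Lv A B : {D : Finset V // isMinDomSet T D}}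
    (hleaf : ((gammaGraph T).neighborSet Lv).ncard = 1)
    (hA : (gammaGraph T).Adj Lv A) (hB : (gammaGraph T).Adj Lv B) (hAB : A ≠ B) : False := by
  obtain ⟨c, hc⟩ := Set.ncard_eq_one.mp hleaf
  have h1 : A ∈ (gammaGraph T).neighborSet Lv := hA
  have h2 : B ∈ (gammaGraph T).neighborSet Lv := hB
  rw [hc, Set.mem_singleton_iff] at h1 h2
  exact hAB (h1.trans h2.symm)

end helpers2

section helpers3
variable {V : Type} [Fintype V] [DecidableEq V] {T : SimpleGraph V}

lemma star (hA : T.IsAcyclic) {S L : Finset V} (hS : isMinDomSet T S) (hL : isMinDomSet T L)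
    {x y u w : V} (hx : x ∈ S) (hy : y ∉ S) (hxy : T.Adj x y)
    (hLeq : L = (S \ {x}) ∪ {y})
    (hleaf : ((gammaGraph T).neighborSet ⟨L, hL⟩).ncard = 1)
    (hu : u ∈ S) (hw : w ∉ S) (huw : T.Adj u w)
    (hpnu : ∀ p ∈ privN T S u, p = u ∨ p = w)
    (hux : u ≠ x) :
    ∃ v, T.Adj u v ∧ T.Adj x v ∧ v ∉ closedNbhd T y ∧ v ∉ closedNbhd T w ∧
      ∀ z ∈ S, z ≠ x → z ≠ u → v ∉ closedNbhd T z := by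
  by_contra hno
  push_neg at hno
  have hyL : y ∈ L := by rw [hLeq]; exact mem_union_right _ (mem_singleton_self y)
  have hmemL : ∀ z ∈ S, z ≠ x → z ∈ L := fun z hz hzx => by
    rw [hLeq]; exact mem_union_left _ (mem_sdiff.mpr ⟨hz, by simpa using hzx⟩)
  have huL : u ∈ L := hmemL u hu hux
  have hsub : ∀ p, p ∈ privN T L u → p ∈ closedNbhd T w ∧ p ∉ closedNbhd T y := by
    intro p hp
    obtain ⟨hpu, hpriv⟩ := hp
    have hpy : p ∉ closedNbhd T y := hpriv y hyL (fun h => hy (h ▸ hu))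
    refine ⟨?_, hpy⟩
    by_contra hpw
    by_cases hpx : p ∈ closedNbhd T x
    · have hup : T.Adj u p := by
        rcases hpu with rfl | h
        · exact absurd (Or.inr huw.symm) hpw
        · exact h
      have hxp : T.Adj x p := by
        rcases hpx with rfl | h
        · exact absurd (Or.inr hxy.symm) hpy
        · exact h
      obtain ⟨z, hz, hzx, hzu, hpz⟩ := hno p hup hxp hpy hpw
      exact hpriv z (hmemL z hz hzx) hzu hpz
    · have hpS : p ∈ privN T S u := by
        refine ⟨hpu, fun z hz hzu => ?_⟩
        by_cases hzx : z = x
        · exact hzx ▸ hpx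
        · exact hpriv z (hmemL z hz hzx) hzu
      rcases hpnu p hpS with rfl | rfl
      · exact hpw (Or.inr huw.symm)
      · exact hpw (Or.inl rfl)
  by_cases hwy : w = y
  · subst hwy
    have hdom : isDomSet T (L.erase u) := by
      intro t
      obtain ⟨d, hd, htd⟩ := hL.1 t
      by_cases hdu : d = u
      · subst hdu
        by_cases hpt : t ∈ privN T L d
        · obtain ⟨hh1, hh2⟩ := hsub t hpt
          exact absurd hh1 hh2
        · simp only [privN, Set.mem_setOf_eq, not_and] at hpt
          push_neg at hpt
          obtain ⟨z, hz, hzd, htz⟩ := hpt htd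
          exact ⟨z, mem_erase.mpr ⟨hzd, hz⟩, htz⟩
      · exact ⟨d, mem_erase.mpr ⟨hdu, hd⟩, htd⟩
    exact absurd (hL.2 _ hdom) (not_le.mpr (card_erase_lt_of_mem huL))
  · have hwL : w ∉ L := by
      rw [hLeq]
      intro hwL
      rcases mem_union.mp hwL with h | h
      · exact hw (mem_sdiff.mp h).1
      · exact hwy (mem_singleton.mp h)
    have hM : isMinDomSet T ((L \ {u}) ∪ {w}) :=
      swap_min hL huL hwL (fun p hp => (hsub p hp).1)
    have hyM : y ∈ (L \ {u}) ∪ {w} :=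
      mem_union_left _ (mem_sdiff.mpr ⟨hyL, by simp [show y ≠ u from fun h => hy (h ▸ hu)]⟩)
    have hadjLM : (gammaGraph T).Adj ⟨L, hL⟩ ⟨(L \ {u}) ∪ {w}, hM⟩ := by
      refine ⟨?_, u, w, huw, Or.inl rfl⟩
      intro hEq
      have hvals : L = (L \ {u}) ∪ {w} := congrArg Subtype.val hEq
      exact hwL (by rw [hvals]; exact mem_union_right _ (mem_singleton_self w))
    have hadjLS : (gammaGraph T).Adj ⟨L, hL⟩ ⟨S, hS⟩ := by
      refine ⟨?_, x, y, hxy, Or.inr hLeq⟩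
      intro hEq
      have hvals : L = S := congrArg Subtype.val hEq
      exact hy (hvals ▸ hyL)
    have hSM : (⟨S, hS⟩ : {D : Finset V // isMinDomSet T D}) ≠ ⟨(L \ {u}) ∪ {w}, hM⟩ := by
      intro hEq
      have hvals : S = (L \ {u}) ∪ {w} := congrArg Subtype.val hEq
      exact hy (by rw [hvals]; exact hyM)
    exact leaf_contra hleaf hadjLS hadjLM hSM

end helpers3

section helpers4
variable {V : Type} [Fintype V] [DecidableEq V] {T : SimpleGraph V}

lemma main_lemma (hA : T.IsAcyclic) {S L₁ L₂ : Finset V}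
    (hS : isMinDomSet T S) (h1 : isMinDomSet T L₁) (h2 : isMinDomSet T L₂)
    (hl1 : ((gammaGraph T).neighborSet ⟨L₁, h1⟩).ncard = 1)
    (hl2 : ((gammaGraph T).neighborSet ⟨L₂, h2⟩).ncard = 1)
    {x y x₂ y₂ : V} (hx : x ∈ S) (hy : y ∉ S) (hxy : T.Adj x y) (e1 : L₁ = (S \ {x}) ∪ {y})
    (hx2 : x₂ ∈ S) (hy2 : y₂ ∉ S) (hxy2 : T.Adj x₂ y₂) (e2 : L₂ = (S \ {x₂}) ∪ {y₂})
    (hdeg : 3 ≤ ((gammaGraph T).neighborSet ⟨S, hS⟩).ncard)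
    (hxx : x ≠ x₂) : False := by
  have pn1 : ∀ p ∈ privN T S x, p = x ∨ p = y := fun p hp => pn_subset hA hxy (e1 ▸ h1.1) hp
  have pn2 : ∀ p ∈ privN T S x₂, p = x₂ ∨ p = y₂ := fun p hp => pn_subset hA hxy2 (e2 ▸ h2.1) hp
  obtain ⟨v, hadj2v, hadjxv, hvy, hvy2, hvz⟩ :=
    star hA hS h1 hx hy hxy e1 hl1 hx2 hy2 hxy2 pn2 hxx.symm
  have hvS : v ∉ S := fun hvS => hvz v hvS hadjxv.ne' hadj2v.ne' (Or.inl rfl)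
  -- membership facts
  have hyL1 : y ∈ L₁ := by rw [e1]; exact mem_union_right _ (mem_singleton_self y)
  have hy2L2 : y₂ ∈ L₂ := by rw [e2]; exact mem_union_right _ (mem_singleton_self y₂)
  have hmem1 : ∀ z ∈ S, z ≠ x → z ∈ L₁ := fun z hz hzx => by
    rw [e1]; exact mem_union_left _ (mem_sdiff.mpr ⟨hz, by simpa using hzx⟩)
  have hmem2 : ∀ z ∈ S, z ≠ x₂ → z ∈ L₂ := fun z hz hzx => by
    rw [e2]; exact mem_union_left _ (mem_sdiff.mpr ⟨hz, by simpa using hzx⟩)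
  have hxL1 : x ∉ L₁ := by
    rw [e1]
    intro h
    rcases mem_union.mp h with h | h
    · exact (mem_sdiff.mp h).2 (mem_singleton_self x)
    · exact hy ((mem_singleton.mp h) ▸ hx)
  have hx2L2 : x₂ ∉ L₂ := by
    rw [e2]
    intro h
    rcases mem_union.mp h with h | h
    · exact (mem_sdiff.mp h).2 (mem_singleton_self x₂)
    · exact hy2 ((mem_singleton.mp h) ▸ hx2)
  -- a third neighbour of S
  have hA1 : (gammaGraph T).Adj ⟨S, hS⟩ ⟨L₁, h1⟩ := by
    refine ⟨?_, x, y, hxy, Or.inl e1⟩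
    intro hEq
    have hvals : S = L₁ := congrArg Subtype.val hEq
    exact hy (by rw [hvals]; exact hyL1)
  have hA2 : (gammaGraph T).Adj ⟨S, hS⟩ ⟨L₂, h2⟩ := by
    refine ⟨?_, x₂, y₂, hxy2, Or.inl e2⟩
    intro hEq
    have hvals : S = L₂ := congrArg Subtype.val hEq
    exact hy2 (by rw [hvals]; exact hy2L2)
  have hA12 : (⟨L₁, h1⟩ : {D : Finset V // isMinDomSet T D}) ≠ ⟨L₂, h2⟩ := by
    intro hEq
    have hvals : L₁ = L₂ := congrArg Subtype.val hEq
    exact hxL1 (hvals ▸ hmem2 x hx hxx)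
  obtain ⟨M, hMmem, hM1, hM2⟩ : ∃ M ∈ (gammaGraph T).neighborSet ⟨S, hS⟩,
      M ≠ (⟨L₁, h1⟩ : {D : Finset V // isMinDomSet T D}) ∧ M ≠ ⟨L₂, h2⟩ := by
    by_contra hcon
    push_neg at hcon
    have hsub : (gammaGraph T).neighborSet ⟨S, hS⟩ ⊆
        {(⟨L₁, h1⟩ : {D : Finset V // isMinDomSet T D}), ⟨L₂, h2⟩} := by
      intro M hM
      by_cases hM1 : M = ⟨L₁, h1⟩
      · exact Or.inl hM1
      · exact Or.inr (hcon M hM hM1)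
    have hle := Set.ncard_le_ncard hsub (Set.toFinite _)
    have h2' : ({(⟨L₁, h1⟩ : {D : Finset V // isMinDomSet T D}), ⟨L₂, h2⟩} :
        Set {D : Finset V // isMinDomSet T D}).ncard ≤ 2 :=
      le_trans (Set.ncard_insert_le _ _) (by simp)
    omega
  obtain ⟨Mv, hMv⟩ := M
  have hadjM : (gammaGraph T).Adj ⟨S, hS⟩ ⟨Mv, hMv⟩ := hMmem
  obtain ⟨a, ha, b, hb, hab, eM⟩ := swap_of_adj hadjM
  have pnAB : ∀ p ∈ privN T S a, p = a ∨ p = b := fun p hp => pn_subset hA hab (eM ▸ hMv.1) hp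
  by_cases hax : a = x
  · -- second neighbour of L₂ via the swap (x, v)
    subst hax
    have hbney : b ≠ y := by
      intro hby
      subst hby
      exact hM1 (Subtype.ext (eM.trans e1.symm))
    have pnx : ∀ p ∈ privN T S a, p = a := by
      intro p hp
      rcases pn1 p hp with h | h
      · exact h
      · rcases pnAB p hp with h' | h'
        · exact h'
        · exact absurd (h ▸ h') (by simpa using hbney.symm)
    have hxL2 : a ∈ L₂ := hmem2 a hx hxx
    have hvL2 : v ∉ L₂ := by
      rw [e2]
      intro h
      rcases mem_union.mp h with h | h
      · exact hvS (mem_sdiff.mp h).1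
      · exact hvy2 (Or.inl (mem_singleton.mp h))
    have hpnL2 : ∀ p, p ∈ privN T L₂ a → p ∈ closedNbhd T v := by
      intro p hp
      obtain ⟨hpx, hpriv⟩ := hp
      by_cases hpx2 : p ∈ closedNbhd T x₂
      · rcases hpx with rfl | hadjxp
        · exact Or.inr hadjxv.symm
        · rcases hpx2 with rfl | hadjx2p
          · exact (no_triangle hA hadjxp hadj2v hadjxv).elim
          · by_cases hpv : p = v
            · exact Or.inl hpv
            · exact (no_c4 hA hadjxp hadjx2p.symm hadj2v hadjxv.symm hxx hpv).elim
      · have hpS : p ∈ privN T S a := by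
          refine ⟨hpx, fun z hz hza => ?_⟩
          by_cases hzx2 : z = x₂
          · exact hzx2 ▸ hpx2
          · exact hpriv z (hmem2 z hz hzx2) hza
        have := pnx p hpS
        rw [this]
        exact Or.inr hadjxv.symm
    have hMin2 : isMinDomSet T ((L₂ \ {a}) ∪ {v}) := swap_min h2 hxL2 hvL2 hpnL2
    have hadjL2M2 : (gammaGraph T).Adj ⟨L₂, h2⟩ ⟨(L₂ \ {a}) ∪ {v}, hMin2⟩ := by
      refine ⟨?_, a, v, hadjxv, Or.inl rfl⟩
      intro hEq
      have hvals : L₂ = (L₂ \ {a}) ∪ {v} := congrArg Subtype.val hEq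
      exact hvL2 (by rw [hvals]; exact mem_union_right _ (mem_singleton_self v))
    have hadjL2S : (gammaGraph T).Adj ⟨L₂, h2⟩ ⟨S, hS⟩ := hA2.symm
    have hSM2 : (⟨S, hS⟩ : {D : Finset V // isMinDomSet T D}) ≠ ⟨(L₂ \ {a}) ∪ {v}, hMin2⟩ := by
      intro hEq
      have hvals : S = (L₂ \ {a}) ∪ {v} := congrArg Subtype.val hEq
      have : y₂ ∈ (L₂ \ {a}) ∪ {v} :=
        mem_union_left _ (mem_sdiff.mpr ⟨hy2L2, by simp [show y₂ ≠ a from fun h => hy2 (h ▸ hx)]⟩)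
      exact hy2 (by rw [hvals]; exact this)
    exact leaf_contra hl2 hadjL2S hadjL2M2 hSM2
  · by_cases hax2 : a = x₂
    · -- second neighbour of L₁ via the swap (x₂, v)
      subst hax2
      have hbney2 : b ≠ y₂ := by
        intro hby
        subst hby
        exact hM2 (Subtype.ext (eM.trans e2.symm))
      have pnx2 : ∀ p ∈ privN T S a, p = a := by
        intro p hp
        rcases pn2 p hp with h | h
        · exact h
        · rcases pnAB p hp with h' | h'
          · exact h'
          · exact absurd (h ▸ h') (by simpa using hbney2.symm)
      have hx2L1 : a ∈ L₁ := hmem1 a hx2 (fun h => hxx h.symm)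
      have hvL1 : v ∉ L₁ := by
        rw [e1]
        intro h
        rcases mem_union.mp h with h | h
        · exact hvS (mem_sdiff.mp h).1
        · exact hvy (Or.inl (mem_singleton.mp h))
      have hpnL1 : ∀ p, p ∈ privN T L₁ a → p ∈ closedNbhd T v := by
        intro p hp
        obtain ⟨hpx2, hpriv⟩ := hp
        rcases hpx2 with rfl | hadj2p
        · exact Or.inr hadj2v.symm
        · by_cases hpx : p ∈ closedNbhd T x
          · rcases hpx with rfl | hadjxp
            · exact (no_triangle hA hadj2p hadjxv hadj2v).elim
            · by_cases hpv : p = v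
              · exact Or.inl hpv
              · exact (no_c4 hA hadjxp hadj2p.symm hadj2v hadjxv.symm hxx hpv).elim
          · have hpS : p ∈ privN T S a := by
              refine ⟨Or.inr hadj2p, fun z hz hza => ?_⟩
              by_cases hzx : z = x
              · exact hzx ▸ hpx
              · exact hpriv z (hmem1 z hz hzx) hza
            have := pnx2 p hpS
            rw [this]
            exact Or.inr hadj2v.symm
      have hMin1 : isMinDomSet T ((L₁ \ {a}) ∪ {v}) := swap_min h1 hx2L1 hvL1 hpnL1
      have hadjL1M1 : (gammaGraph T).Adj ⟨L₁, h1⟩ ⟨(L₁ \ {a}) ∪ {v}, hMin1⟩ := by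
        refine ⟨?_, a, v, hadj2v, Or.inl rfl⟩
        intro hEq
        have hvals : L₁ = (L₁ \ {a}) ∪ {v} := congrArg Subtype.val hEq
        exact hvL1 (by rw [hvals]; exact mem_union_right _ (mem_singleton_self v))
      have hadjL1S : (gammaGraph T).Adj ⟨L₁, h1⟩ ⟨S, hS⟩ := hA1.symm
      have hSM1 : (⟨S, hS⟩ : {D : Finset V // isMinDomSet T D}) ≠ ⟨(L₁ \ {a}) ∪ {v}, hMin1⟩ := by
        intro hEq
        have hvals : S = (L₁ \ {a}) ∪ {v} := congrArg Subtype.val hEq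
        have : y ∈ (L₁ \ {a}) ∪ {v} :=
          mem_union_left _ (mem_sdiff.mpr ⟨hyL1, by simp [show y ≠ a from fun h => hy (h ▸ hx2)]⟩)
        exact hy (by rw [hvals]; exact this)
      exact leaf_contra hl1 hadjL1S hadjL1M1 hSM1
    · -- a ∉ {x, x₂} : six-cycle contradiction
      obtain ⟨v3, hadjav3, hadjxv3, hv3y, hv3b, hv3z⟩ :=
        star hA hS h1 hx hy hxy e1 hl1 ha hb hab pnAB hax
      obtain ⟨v4, hadjav4, hadjx2v4, hv4y2, hv4b, hv4z⟩ :=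
        star hA hS h2 hx2 hy2 hxy2 e2 hl2 ha hb hab pnAB hax2
      have hxa : x ≠ a := fun h => hax h.symm
      have hx2a : x₂ ≠ a := fun h => hax2 h.symm
      have hv4x : v4 ∉ closedNbhd T x := hv4z x hx hxx hxa
      have hv3x2 : v3 ∉ closedNbhd T x₂ := hv3z x₂ hx2 hxx.symm hx2a
      have d3 : x ≠ v4 := fun h => hv4x (Or.inl h.symm)
      have d6 : v3 ≠ v4 := fun h => hv4x (h ▸ (Or.inr hadjxv3 : v3 ∈ closedNbhd T x))
      have d7 : v3 ≠ x₂ := fun h => hv3x2 (Or.inl h)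
      refine two_paths hA
        (p := Walk.cons hadjxv (Walk.cons hadj2v.symm Walk.nil))
        (q := Walk.cons hadjxv3 (Walk.cons hadjav3.symm
          (Walk.cons hadjav4 (Walk.cons hadjx2v4.symm Walk.nil)))) ?_ ?_ ?_
      · simp [Walk.cons_isPath_iff, hadjxv.ne, hadj2v.ne', hxx]
      · simp [Walk.cons_isPath_iff, hadjxv3.ne, hadjav3.ne', hadjav4.ne, hadjx2v4.ne',
          hxa, d3, hxx, d6, d7, hx2a.symm]
      · intro h
        have := congrArg List.length h
        simp at this
end helpers4
theorem stmt11 {V : Type} [Fintype V] [DecidableEq V] (T : SimpleGraph V) (hT : T.IsTree)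
    (S : Finset V) (hS : isMinDomSet T S)
    (k : ℕ) (hk : 1 ≤ k) (L : Fin k → Finset V) (hL : ∀ i, isMinDomSet T (L i))
    (hadj : ∀ i, (gammaGraph T).Adj ⟨S, hS⟩ ⟨L i, hL i⟩)
    (hleaf : ∀ i, ((gammaGraph T).neighborSet ⟨L i, hL i⟩).ncard = 1)
    (hdeg : 3 ≤ ((gammaGraph T).neighborSet ⟨S, hS⟩).ncard) :
    ∃ x ∈ S, ∃ y : Fin k → V,
      ∀ i, y i ∉ S ∧ T.Adj x (y i) ∧ L i = (S \ {x}) ∪ {y i} := by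
  have H : ∀ i, ∃ a ∈ S, ∃ b ∉ S, T.Adj a b ∧ L i = (S \ {a}) ∪ {b} :=
    fun i => swap_of_adj (hadj i)
  choose xf hxf yf hyf hxyf heqf using H
  set i0 : Fin k := ⟨0, hk⟩
  refine ⟨xf i0, hxf i0, yf, fun i => ?_⟩
  by_cases hxi : xf i = xf i0
  · exact ⟨hyf i, hxi ▸ hxyf i, hxi ▸ heqf i⟩
  · exact (main_lemma hT.IsAcyclic hS (hL i0) (hL i) (hleaf i0) (hleaf i)
      (hxf i0) (hyf i0) (hxyf i0) (heqf i0)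
      (hxf i) (hyf i) (hxyf i) (heqf i) hdeg (fun h => hxi h.symm)).elim
end
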